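/- Let n ≥ 1, let k be a field, and let k⟨X⟩ be the free associative algebra over k on generators x_1,…,x_n. Let S = { x_{σ(1)}x_{σ(2)}⋯x_{σ(n)} − x_1x_2⋯x_n : σ ∈ Sym_n, σ ≠ id } and let S̃ be the union of S with the following sets of polynomials (where x_ε denotes x_1x_2⋯x_n): (2) x_i·x_ε − x_ε·x_i for 2 ≤ i ≤ n; (3) x_i·x_1^m·x_ε − x_1^m·x_ε·x_i for m ≥ 1 and 2 ≤ i ≤ n; (4) x_ε·x_{i_1}⋯x_{i_{m+1}} − x_ε·x_{j_1}⋯x_{j_{m+1}} for m ≥ 1 and 2 ≤ i_1,…,i_{m+1} ≤ n, where (j_1,…,j_{m+1}) is the nondecreasing rearrangement of (i_1,…,i_{m+1}) and is distinct from (i_1,…,i_{m+1}); (5) x_ε·x_{i_1}⋯x_{i_m}·x_1 − x_1·x_ε·x_{i_1}⋯x_{i_m} for m ≥ 1 and 2 ≤ i_1,…,i_m ≤ n. Then the two-sided ideal of k⟨X⟩ generated by S equals the two-sided ideal generated by S̃. -/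

import Mathlib

/-- The monomial of `k⟨X⟩` corresponding to a word `w` in the generators. -/
noncomputable def wordElem (k : Type) [Field k] {n : ℕ} (w : List (Fin n)) :
    FreeAlgebra k (Fin n) :=
  (w.map (FreeAlgebra.ι k)).prod

/-- The monomial `x_ε = x_1 x_2 ⋯ x_n` of `k⟨X⟩`. -/
noncomputable def epsElem (k : Type) [Field k] (n : ℕ) : FreeAlgebra k (Fin n) :=
  wordElem k (List.ofFn fun i : Fin n => i)

/-- The set `{ x_{σ(1)} ⋯ x_{σ(n)} − x_1 ⋯ x_n : σ ∈ Sym_n }`. -/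
noncomputable def relSet (k : Type) [Field k] (n : ℕ) : Set (FreeAlgebra k (Fin n)) :=
  { p | ∃ σ : Equiv.Perm (Fin n),
      p = wordElem k (List.ofFn fun i => σ i) - epsElem k n }


namespace SpanAux

variable (k : Type) [Field k] (n : ℕ)

def S : Set (FreeAlgebra k (Fin n)) :=
  {p | ∃ σ : Equiv.Perm (Fin n), σ ≠ 1 ∧
      p = wordElem k (List.ofFn fun i => σ i) - epsElem k n}

abbrev I : TwoSidedIdeal (FreeAlgebra k (Fin n)) := TwoSidedIdeal.span (S k n)

abbrev Q := (I k n).ringCon.Quotient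

noncomputable def q : FreeAlgebra k (Fin n) →+* Q k n := (I k n).ringCon.mk'

variable {k n}

lemma q_eq_iff {a b : FreeAlgebra k (Fin n)} : q k n a = q k n b ↔ a - b ∈ I k n := by
  rw [show q k n a = (a : Q k n) from rfl, show q k n b = (b : Q k n) from rfl,
    RingCon.eq, TwoSidedIdeal.rel_iff]

lemma wordElem_nil : wordElem k ([] : List (Fin n)) = 1 := rfl

lemma wordElem_append (u v : List (Fin n)) :
    wordElem k (u ++ v) = wordElem k u * wordElem k v := by
  simp [wordElem]

lemma wordElem_cons (a : Fin n) (l : List (Fin n)) :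
    wordElem k (a :: l) = FreeAlgebra.ι k a * wordElem k l := by
  simp [wordElem]

lemma wordElem_singleton (a : Fin n) : wordElem k [a] = FreeAlgebra.ι k a := by
  simp [wordElem]

lemma wordElem_replicate (m : ℕ) (a : Fin n) :
    wordElem k (List.replicate m a) = FreeAlgebra.ι k a ^ m := by
  induction m with
  | zero => simp [wordElem]
  | succ m ih => rw [List.replicate_succ, wordElem_cons, ih, pow_succ']

/-- Any full permutation word is congruent to `x_ε` mod the ideal. -/
lemma q_wordElem_of_perm {w : List (Fin n)}
    (h : w.Perm (List.ofFn fun i : Fin n => i)) :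
    q k n (wordElem k w) = q k n (epsElem k n) := by
  have hlen : w.length = n := by simpa using h.length_eq
  have hnd : w.Nodup := h.nodup_iff.mpr (List.nodup_ofFn.mpr fun a b hab => hab)
  have hfinj : Function.Injective (fun i : Fin n => w.get (Fin.cast hlen.symm i)) := by
    intro a b hab
    have := (List.Nodup.get_inj_iff hnd).mp hab
    exact Fin.cast_injective hlen.symm this
  let σ : Equiv.Perm (Fin n) :=
    Equiv.ofBijective _ ((Finite.injective_iff_bijective).mp hfinj)
  have hw : (List.ofFn fun i => σ i) = w := by
    apply List.ext_get (by simpa using hlen.symm)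
    intro i h1 h2
    simp [σ, List.get_ofFn, Equiv.ofBijective]
  by_cases hσ : σ = 1
  · have : w = List.ofFn fun i : Fin n => i := by
      rw [← hw, hσ]; rfl
    rw [this]; rfl
  · rw [q_eq_iff, ← hw]
    exact TwoSidedIdeal.subset_span ⟨σ, hσ, rfl⟩

lemma q_wordElem_full {w : List (Fin n)} (hnd : w.Nodup) (hmem : ∀ a, a ∈ w) :
    q k n (wordElem k w) = q k n (epsElem k n) := by
  apply q_wordElem_of_perm
  rw [List.perm_ext_iff_of_nodup hnd (List.nodup_ofFn.mpr fun a b hab => hab)]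
  intro a
  simp [hmem a, List.mem_ofFn]

/-- complement of a list inside all of `Fin n` -/
def compl (l : List (Fin n)) : List (Fin n) :=
  (List.ofFn fun i : Fin n => i).filter (fun a => ¬ a ∈ l)

lemma compl_nodup (l : List (Fin n)) : (compl l).Nodup :=
  List.Nodup.filter _ (List.nodup_ofFn.mpr fun a b hab => hab)

lemma mem_compl_iff {l : List (Fin n)} {a : Fin n} : a ∈ compl l ↔ ¬ a ∈ l := by
  simp [compl, List.mem_filter, List.mem_ofFn]

lemma full_append_compl {l : List (Fin n)} (hnd : l.Nodup) :
    q k n (wordElem k (l ++ compl l)) = q k n (epsElem k n) := by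
  apply q_wordElem_full
  · refine List.Nodup.append hnd (compl_nodup l) ?_
    intro a ha ha'
    exact (mem_compl_iff.mp ha') ha
  · intro a
    by_cases h : a ∈ l
    · simp [h]
    · simp [List.mem_append, mem_compl_iff, h]

lemma full_compl_append {l : List (Fin n)} (hnd : l.Nodup) :
    q k n (wordElem k (compl l ++ l)) = q k n (epsElem k n) := by
  apply q_wordElem_full
  · refine List.Nodup.append (compl_nodup l) hnd ?_
    intro a ha ha'
    exact (mem_compl_iff.mp ha) ha'
  · intro a
    by_cases h : a ∈ l
    · simp [h]
    · simp [List.mem_append, mem_compl_iff, h]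

/-- `x_ε` commutes with every generator mod the ideal. -/
lemma eps_comm_gen (i : Fin n) :
    q k n (FreeAlgebra.ι k i) * q k n (epsElem k n)
      = q k n (epsElem k n) * q k n (FreeAlgebra.ι k i) := by
  set r := compl ([i] : List (Fin n)) with hr
  have h1 : q k n (wordElem k (r ++ [i])) = q k n (epsElem k n) :=
    full_compl_append (List.nodup_singleton i)
  have h2 : q k n (wordElem k ([i] ++ r)) = q k n (epsElem k n) :=
    full_append_compl (List.nodup_singleton i)
  calc q k n (FreeAlgebra.ι k i) * q k n (epsElem k n)
      = q k n (FreeAlgebra.ι k i) * q k n (wordElem k (r ++ [i])) := by rw [h1]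
    _ = q k n (wordElem k ([i] ++ r)) * q k n (FreeAlgebra.ι k i) := by
        rw [← map_mul, ← map_mul, ← wordElem_singleton (k := k) i, ← wordElem_append,
          ← wordElem_append, List.append_assoc]
    _ = q k n (epsElem k n) * q k n (FreeAlgebra.ι k i) := by rw [h2]

/-- `x_ε` commutes with every word mod the ideal. -/
lemma eps_comm_word (l : List (Fin n)) :
    q k n (wordElem k l) * q k n (epsElem k n)
      = q k n (epsElem k n) * q k n (wordElem k l) := by
  induction l with
  | nil => simp [wordElem]
  | cons a t ih =>
      rw [wordElem_cons, map_mul, mul_assoc, ih, ← mul_assoc, eps_comm_gen, mul_assoc]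

/-- swapping two letters after `x_ε`. -/
lemma eps_swap (b c : Fin n) :
    q k n (epsElem k n) * q k n (FreeAlgebra.ι k b) * q k n (FreeAlgebra.ι k c)
      = q k n (epsElem k n) * q k n (FreeAlgebra.ι k c) * q k n (FreeAlgebra.ι k b) := by
  by_cases hbc : b = c
  · rw [hbc]
  set r := compl ([b, c] : List (Fin n)) with hr
  have hnd : ([b, c] : List (Fin n)).Nodup := by simp [hbc]
  have hnd' : ([c, b] : List (Fin n)).Nodup := by simp [Ne.symm hbc]
  have hmemeq : ∀ a : Fin n, (a ∈ ([c, b] : List (Fin n))) ↔ a ∈ ([b, c] : List (Fin n)) := by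
    intro a; simp [or_comm]
  have h1 : q k n (wordElem k (r ++ [c, b])) = q k n (epsElem k n) := by
    apply q_wordElem_full
    · refine List.Nodup.append (compl_nodup _) hnd' ?_
      intro a ha ha'
      exact (mem_compl_iff.mp ha) ((hmemeq a).mp ha')
    · intro a
      by_cases h : a ∈ ([b, c] : List (Fin n))
      · simp only [List.mem_append, hmemeq]; exact Or.inr h
      · simp only [List.mem_append, hr, mem_compl_iff]; exact Or.inl h
  have h2 : q k n (wordElem k ([b, c] ++ r)) = q k n (epsElem k n) :=
    full_append_compl hnd
  have expandbc : q k n (wordElem k ([b, c] : List (Fin n)))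
      = q k n (FreeAlgebra.ι k b) * q k n (FreeAlgebra.ι k c) := by
    simp [wordElem_cons, wordElem_singleton, wordElem_nil, map_mul]
  have hcw : (q k n (FreeAlgebra.ι k b) * q k n (FreeAlgebra.ι k c)) * q k n (epsElem k n)
      = q k n (epsElem k n) * (q k n (FreeAlgebra.ι k b) * q k n (FreeAlgebra.ι k c)) := by
    rw [← expandbc]; exact eps_comm_word [b, c]
  calc q k n (epsElem k n) * q k n (FreeAlgebra.ι k b) * q k n (FreeAlgebra.ι k c)
      = (q k n (FreeAlgebra.ι k b) * q k n (FreeAlgebra.ι k c)) * q k n (epsElem k n) := by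
        rw [mul_assoc, ← hcw]
    _ = (q k n (FreeAlgebra.ι k b) * q k n (FreeAlgebra.ι k c))
          * q k n (wordElem k (r ++ [c, b])) := by rw [h1]
    _ = q k n (wordElem k ([b, c] ++ r))
          * (q k n (FreeAlgebra.ι k c) * q k n (FreeAlgebra.ι k b)) := by
        simp only [wordElem_append, wordElem_cons, wordElem_nil, map_mul, map_one, mul_one, one_mul, mul_assoc]
    _ = q k n (epsElem k n) * (q k n (FreeAlgebra.ι k c) * q k n (FreeAlgebra.ι k b)) := by
        rw [h2]
    _ = q k n (epsElem k n) * q k n (FreeAlgebra.ι k c) * q k n (FreeAlgebra.ι k b) := by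
        rw [mul_assoc]

/-- rearranging a word after `x_ε`. -/
lemma eps_perm {u v : List (Fin n)} (h : u.Perm v) :
    q k n (epsElem k n * wordElem k u) = q k n (epsElem k n * wordElem k v) := by
  induction h with
  | nil => rfl
  | cons a h ih =>
      simp only [map_mul] at ih ⊢
      rw [wordElem_cons, wordElem_cons]
      simp only [map_mul]
      rw [← mul_assoc, ← eps_comm_gen, mul_assoc, ih, ← mul_assoc, eps_comm_gen, mul_assoc]
  | swap a b l =>
      simp only [map_mul, wordElem_cons, ← mul_assoc]
      rw [eps_swap]
  | trans h1 h2 ih1 ih2 => rw [ih1, ih2]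

/-- `x_ε` is central mod the ideal. -/
lemma eps_central (x : FreeAlgebra k (Fin n)) :
    q k n x * q k n (epsElem k n) = q k n (epsElem k n) * q k n x := by
  induction x using FreeAlgebra.induction with
  | grade0 r =>
      rw [← map_mul, ← map_mul, Algebra.commutes]
  | grade1 i => exact eps_comm_gen i
  | mul a b ha hb => rw [map_mul, mul_assoc, hb, ← mul_assoc, ha, mul_assoc]
  | add a b ha hb => rw [map_add, add_mul, ha, hb, mul_add]

lemma span_le' {s : Set (FreeAlgebra k (Fin n))} {T : TwoSidedIdeal (FreeAlgebra k (Fin n))}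
    (h : s ⊆ T) : TwoSidedIdeal.span s ≤ T :=
  fun _ hx => TwoSidedIdeal.mem_span_iff.mp hx T h

end SpanAux

open SpanAux in
/-- The ideal generated by the permutation relations of symmetric type equals the ideal
generated by the enlarged set `S̃` consisting of the five types of polynomials. -/
theorem span_S_eq_span_Stilde (n : ℕ) (hn : 1 ≤ n) (k : Type) [Field k] :
    TwoSidedIdeal.span
      {p : FreeAlgebra k (Fin n) | ∃ σ : Equiv.Perm (Fin n), σ ≠ 1 ∧
          p = wordElem k (List.ofFn fun i => σ i) - epsElem k n} =
    TwoSidedIdeal.span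
      ({p : FreeAlgebra k (Fin n) | ∃ σ : Equiv.Perm (Fin n), σ ≠ 1 ∧
          p = wordElem k (List.ofFn fun i => σ i) - epsElem k n} ∪
       {p : FreeAlgebra k (Fin n) | ∃ i : Fin n, i.val ≠ 0 ∧
          p = FreeAlgebra.ι k i * epsElem k n - epsElem k n * FreeAlgebra.ι k i} ∪
       {p : FreeAlgebra k (Fin n) | ∃ (m : ℕ) (i : Fin n), 1 ≤ m ∧ i.val ≠ 0 ∧
          p = FreeAlgebra.ι k i * FreeAlgebra.ι k (⟨0, hn⟩ : Fin n) ^ m * epsElem k n -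
            FreeAlgebra.ι k (⟨0, hn⟩ : Fin n) ^ m * epsElem k n * FreeAlgebra.ι k i} ∪
       {p : FreeAlgebra k (Fin n) | ∃ l l' : List (Fin n), 2 ≤ l.length ∧
          (∀ a ∈ l, a.val ≠ 0) ∧ l.Perm l' ∧ l'.Pairwise (· ≤ ·) ∧ l ≠ l' ∧
          p = epsElem k n * wordElem k l - epsElem k n * wordElem k l'} ∪
       {p : FreeAlgebra k (Fin n) | ∃ l : List (Fin n), 1 ≤ l.length ∧
          (∀ a ∈ l, a.val ≠ 0) ∧
          p = epsElem k n * wordElem k l * FreeAlgebra.ι k (⟨0, hn⟩ : Fin n) -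
            FreeAlgebra.ι k (⟨0, hn⟩ : Fin n) * epsElem k n * wordElem k l}) := by
  apply le_antisymm
  · apply span_le'
    intro p hp
    exact TwoSidedIdeal.subset_span (Or.inl (Or.inl (Or.inl (Or.inl hp))))
  · apply span_le'
    rintro p ((((hp | hp) | hp) | hp) | hp)
    · exact TwoSidedIdeal.subset_span hp
    · obtain ⟨i, -, rfl⟩ := hp
      refine q_eq_iff.mp ?_
      rw [map_mul, map_mul]
      exact eps_central (FreeAlgebra.ι k i)
    · obtain ⟨m, i, -, -, rfl⟩ := hp
      refine q_eq_iff.mp ?_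
      set z : Fin n := ⟨0, hn⟩ with hz
      have hperm : (i :: List.replicate m z).Perm (List.replicate m z ++ [i]) := by
        simpa using List.perm_append_comm (l₁ := [i]) (l₂ := List.replicate m z)
      have e1 : wordElem k (i :: List.replicate m z)
          = FreeAlgebra.ι k i * FreeAlgebra.ι k z ^ m := by
        rw [wordElem_cons, wordElem_replicate]
      have e2 : wordElem k (List.replicate m z ++ [i])
          = FreeAlgebra.ι k z ^ m * FreeAlgebra.ι k i := by
        rw [wordElem_append, wordElem_replicate, wordElem_singleton]
      have key := eps_perm (k := k) hperm
      rw [e1, e2] at key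
      calc q k n (FreeAlgebra.ι k i * FreeAlgebra.ι k z ^ m * epsElem k n)
          = q k n (epsElem k n) * q k n (FreeAlgebra.ι k i * FreeAlgebra.ι k z ^ m) := by
            rw [map_mul, eps_central]
        _ = q k n (epsElem k n * (FreeAlgebra.ι k i * FreeAlgebra.ι k z ^ m)) :=
            (map_mul _ _ _).symm
        _ = q k n (epsElem k n * (FreeAlgebra.ι k z ^ m * FreeAlgebra.ι k i)) := key
        _ = q k n (epsElem k n) * q k n (FreeAlgebra.ι k z ^ m) * q k n (FreeAlgebra.ι k i) := by
            rw [map_mul, map_mul, mul_assoc]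
        _ = q k n (FreeAlgebra.ι k z ^ m) * q k n (epsElem k n) * q k n (FreeAlgebra.ι k i) := by
            rw [← eps_central]
        _ = q k n (FreeAlgebra.ι k z ^ m * epsElem k n * FreeAlgebra.ι k i) := by
            rw [map_mul, map_mul]
    · obtain ⟨l, l', -, -, hperm, -, -, rfl⟩ := hp
      exact q_eq_iff.mp (eps_perm hperm)
    · obtain ⟨l, -, -, rfl⟩ := hp
      refine q_eq_iff.mp ?_
      set z : Fin n := ⟨0, hn⟩ with hz
      have hperm : (l ++ [z]).Perm (z :: l) := by
        simpa using List.perm_append_comm (l₁ := l) (l₂ := [z])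
      have e1 : wordElem k (l ++ [z]) = wordElem k l * FreeAlgebra.ι k z := by
        rw [wordElem_append, wordElem_singleton]
      have e2 : wordElem k (z :: l) = FreeAlgebra.ι k z * wordElem k l := wordElem_cons z l
      have key := eps_perm (k := k) hperm
      rw [e1, e2] at key
      calc q k n (epsElem k n * wordElem k l * FreeAlgebra.ι k z)
          = q k n (epsElem k n * (wordElem k l * FreeAlgebra.ι k z)) := by rw [mul_assoc]
        _ = q k n (epsElem k n * (FreeAlgebra.ι k z * wordElem k l)) := key
        _ = q k n (epsElem k n) * q k n (FreeAlgebra.ι k z) * q k n (wordElem k l) := by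
            rw [map_mul, map_mul, mul_assoc]
        _ = q k n (FreeAlgebra.ι k z) * q k n (epsElem k n) * q k n (wordElem k l) := by
            rw [← eps_central]
        _ = q k n (FreeAlgebra.ι k z * epsElem k n * wordElem k l) := by
            rw [map_mul, map_mul]
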